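/- Let (X,T) be a TDS with metric d and μ a Borel probability measure on X. Then for every ε > 0, the upper Brin–Katok ε-entropy satisfies h̄_μ^{BK}(T, ε) ≤ 𝒫_μ(T, d, ε/10), where 𝒫_μ is the Katok-type packing ε-entropy of μ. -/

import Mathlib

open MeasureTheory Filter Set Metric Topology ENNReal

variable {X : Type*} [MetricSpace X]

/-- The `n`-th Bowen metric `d_n(x,y) = max_{0 ≤ j ≤ n-1} d(T^j x, T^j y)`. -/
noncomputable def bowenDist (T : X → X) (n : ℕ) (x y : X) : ℝ :=
  ⨆ j ∈ Finset.range n, dist (T^[j] x) (T^[j] y)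

/-- The open Bowen ball of order `n` and radius `ε`. -/
def bowenBall (T : X → X) (n : ℕ) (x : X) (ε : ℝ) : Set X :=
  {y | bowenDist T n x y < ε}

/-- The closed Bowen ball of order `n` and radius `ε`. -/
def bowenClosedBall (T : X → X) (n : ℕ) (x : X) (ε : ℝ) : Set X :=
  {y | bowenDist T n x y ≤ ε}

/-- `F` is `(n,ε)`-separated. -/
def IsBowenSeparated (T : X → X) (n : ℕ) (ε : ℝ) (F : Set X) : Prop :=
  ∀ x ∈ F, ∀ y ∈ F, x ≠ y → ε < bowenDist T n x y

/-- Maximal cardinality of an `(n,ε)`-separated subset of `Z`. -/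
noncomputable def sepNum (T : X → X) (n : ℕ) (ε : ℝ) (Z : Set X) : ℕ :=
  sSup {k | ∃ F : Finset X, ↑F ⊆ Z ∧ IsBowenSeparated T n ε ↑F ∧ F.card = k}

/-- A finite Borel measurable partition of `X`. -/
def IsMeasPartition [MeasurableSpace X] (P : Finset (Set X)) : Prop :=
  (∀ A ∈ P, MeasurableSet A) ∧ (∀ A ∈ P, ∀ B ∈ P, A ≠ B → Disjoint A B) ∧
    (⋃ A ∈ P, A) = Set.univ

/-- A finite open cover of `X`. -/
def IsOpenCover (U : Finset (Set X)) : Prop :=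
  (∀ A ∈ U, IsOpen A) ∧ (⋃ A ∈ U, A) = Set.univ

/-- The `n`-th join `⋁_{j=0}^{n-1} T^{-j} P` of a finite family of sets. -/
noncomputable def joinPart (T : X → X) (P : Finset (Set X)) (n : ℕ) : Finset (Set X) := by
  classical
  exact (Fintype.piFinset (fun _ : Fin n => P)).image
    (fun f => ⋂ j : Fin n, T^[(j : ℕ)] ⁻¹' f j)

/-- Static entropy of a finite partition. -/
noncomputable def partEntropy [MeasurableSpace X] (μ : Measure X) (P : Finset (Set X)) : ℝ :=
  ∑ A ∈ P, Real.negMulLog (μ A).toReal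

/-- Kolmogorov–Sinai entropy of `T` w.r.t. the partition `P`. -/
noncomputable def ksEntropyPart [MeasurableSpace X] (T : X → X) (μ : Measure X)
    (P : Finset (Set X)) : ℝ :=
  limsup (fun n => partEntropy μ (joinPart T P n) / n) atTop

/-- Kolmogorov–Sinai entropy of `(X,T,μ)`. -/
noncomputable def ksEntropy [MeasurableSpace X] (T : X → X) (μ : Measure X) : ℝ≥0∞ :=
  ⨆ (P : Finset (Set X)) (_ : IsMeasPartition P), ENNReal.ofReal (ksEntropyPart T μ P)

/-- `N_μ(V, c)`: the minimal cardinality of a subfamily of `V` whose union has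
measure at least `c`. -/
noncomputable def coverNum [MeasurableSpace X] (μ : Measure X) (V : Finset (Set X)) (c : ℝ) : ℕ :=
  sInf {k | ∃ W : Finset (Set X), W ⊆ V ∧ W.card = k ∧ ENNReal.ofReal c ≤ μ (⋃ A ∈ W, A)}

/-- Shapira's entropy of the open cover `U` at level `δ`. -/
noncomputable def shapiraEnt [MeasurableSpace X] (T : X → X) (μ : Measure X)
    (U : Finset (Set X)) (δ : ℝ) : ℝ :=
  limsup (fun n => Real.log (coverNum μ (joinPart T U n) δ) / n) atTop

/-- `R_μ^δ(T,n,ε)`: minimal number of Bowen `(n,ε)`-balls whose union has measure `> 1 - δ`. -/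
noncomputable def katokCovNum [MeasurableSpace X] (T : X → X) (μ : Measure X) (n : ℕ)
    (ε δ : ℝ) : ℕ :=
  sInf {k | ∃ E : Finset X, E.card = k ∧
    1 - ENNReal.ofReal δ < μ (⋃ x ∈ E, bowenBall T n x ε)}

/-- Upper Katok `ε`-entropy at level `δ`. -/
noncomputable def katokUpperδ [MeasurableSpace X] (T : X → X) (μ : Measure X) (ε δ : ℝ) : ℝ≥0∞ :=
  limsup (fun n => ENNReal.ofReal (Real.log (katokCovNum T μ n ε δ)) / n) atTop

/-- Lower Katok `ε`-entropy at level `δ`. -/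
noncomputable def katokLowerδ [MeasurableSpace X] (T : X → X) (μ : Measure X) (ε δ : ℝ) : ℝ≥0∞ :=
  liminf (fun n => ENNReal.ofReal (Real.log (katokCovNum T μ n ε δ)) / n) atTop

/-- Upper Katok `ε`-entropy: the limit of `katokUpperδ` as `δ → 0`. -/
noncomputable def katokUpper [MeasurableSpace X] (T : X → X) (μ : Measure X) (ε : ℝ) : ℝ≥0∞ :=
  ⨆ δ ∈ Set.Ioo (0 : ℝ) 1, katokUpperδ T μ ε δ

/-- Lower Katok `ε`-entropy: the limit of `katokLowerδ` as `δ → 0`. -/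
noncomputable def katokLower [MeasurableSpace X] (T : X → X) (μ : Measure X) (ε : ℝ) : ℝ≥0∞ :=
  ⨆ δ ∈ Set.Ioo (0 : ℝ) 1, katokLowerδ T μ ε δ

/-- `-log μ(S)`, as an extended nonnegative real (`∞` when `μ S = 0`). -/
noncomputable def negLogMeas [MeasurableSpace X] (μ : Measure X) (S : Set X) : ℝ≥0∞ :=
  if μ S = 0 then ⊤ else ENNReal.ofReal (-Real.log (μ S).toReal)

/-- Upper Brin–Katok local `ε`-entropy of `μ`. -/
noncomputable def bkUpper [MeasurableSpace X] (T : X → X) (μ : Measure X) (ε : ℝ) : ℝ≥0∞ :=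
  ∫⁻ x, limsup (fun n => negLogMeas μ (bowenBall T n x ε) / n) atTop ∂μ

/-- Lower Brin–Katok local `ε`-entropy of `μ`. -/
noncomputable def bkLower [MeasurableSpace X] (T : X → X) (μ : Measure X) (ε : ℝ) : ℝ≥0∞ :=
  ∫⁻ x, liminf (fun n => negLogMeas μ (bowenBall T n x ε) / n) atTop ∂μ

/-- `∑ e^{-s n_i}` over a family of (center, order) pairs. -/
noncomputable def weightSum (s : ℝ) (I : Set (X × ℕ)) : ℝ≥0∞ :=
  ∑' p : I, ENNReal.ofReal (Real.exp (-(s * ((p : X × ℕ).2 : ℝ))))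

/-- Carathéodory–Pesin Bowen pre-measure `M(T,d,Z,s,N,ε)`. -/
noncomputable def bowenPre (T : X → X) (Z : Set X) (s : ℝ) (N : ℕ) (ε : ℝ) : ℝ≥0∞ :=
  ⨅ (I : Set (X × ℕ)) (_ : I.Countable ∧ (∀ p ∈ I, N ≤ p.2) ∧
      Z ⊆ ⋃ p ∈ I, bowenBall T p.2 p.1 ε), weightSum s I

/-- `M(T,d,Z,s,ε) = lim_{N→∞} M(T,d,Z,s,N,ε)`. -/
noncomputable def bowenCP (T : X → X) (Z : Set X) (s : ℝ) (ε : ℝ) : ℝ≥0∞ :=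
  ⨆ N, bowenPre T Z s N ε

/-- Bowen `ε`-entropy of the subset `Z`: the critical value of `s ↦ M(T,d,Z,s,ε)`. -/
noncomputable def bowenEnt (T : X → X) (Z : Set X) (ε : ℝ) : ℝ≥0∞ :=
  sInf {a : ℝ≥0∞ | ∃ s : ℝ, 0 ≤ s ∧ a = ENNReal.ofReal s ∧ bowenCP T Z s ε = 0}

/-- Packing pre-measure `P(T,d,Z,s,N,ε)`: supremum of `∑ e^{-n_i s}` over pairwise disjoint
families of closed Bowen balls with centers in `Z` and orders `≥ N`. -/
noncomputable def packPre (T : X → X) (Z : Set X) (s : ℝ) (N : ℕ) (ε : ℝ) : ℝ≥0∞ :=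
  ⨆ (I : Set (X × ℕ)) (_ : I.Countable ∧ (∀ p ∈ I, N ≤ p.2 ∧ p.1 ∈ Z) ∧
      I.PairwiseDisjoint (fun p => bowenClosedBall T p.2 p.1 ε)), weightSum s I

/-- `P(T,d,Z,s,ε) = lim_{N→∞} P(T,d,Z,s,N,ε)`. -/
noncomputable def packCP (T : X → X) (Z : Set X) (s : ℝ) (ε : ℝ) : ℝ≥0∞ :=
  ⨅ N, packPre T Z s N ε

/-- `𝒫(T,d,Z,s,ε) = inf {∑_i P(T,d,Z_i,s,ε) : Z ⊆ ⋃ Z_i}`. -/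
noncomputable def packOuter (T : X → X) (Z : Set X) (s : ℝ) (ε : ℝ) : ℝ≥0∞ :=
  ⨅ (Zs : ℕ → Set X) (_ : Z ⊆ ⋃ i, Zs i), ∑' i, packCP T (Zs i) s ε

/-- Packing `ε`-entropy of the subset `Z`: critical value of `s ↦ 𝒫(T,d,Z,s,ε)`. -/
noncomputable def packEnt (T : X → X) (Z : Set X) (ε : ℝ) : ℝ≥0∞ :=
  sInf {a : ℝ≥0∞ | ∃ s : ℝ, 0 ≤ s ∧ a = ENNReal.ofReal s ∧ packOuter T Z s ε = 0}

/-- Packing topological entropy of a subset: `lim_{ε → 0} h_top^P(T,Z,d,ε)`. -/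
noncomputable def packEntTotal (T : X → X) (Z : Set X) : ℝ≥0∞ :=
  ⨆ (ε : ℝ) (_ : 0 < ε), packEnt T Z ε

/-- Katok-type Bowen pre-measure `M^δ(T,d,μ,s,N,ε)` for a measure `μ`. -/
noncomputable def bowenPreMeas [MeasurableSpace X] (T : X → X) (μ : Measure X) (s : ℝ)
    (N : ℕ) (ε δ : ℝ) : ℝ≥0∞ :=
  ⨅ (I : Set (X × ℕ)) (_ : I.Countable ∧ (∀ p ∈ I, N ≤ p.2) ∧
      1 - ENNReal.ofReal δ < μ (⋃ p ∈ I, bowenBall T p.2 p.1 ε)), weightSum s I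

/-- The critical value `M^δ(T,d,μ,ε)`. -/
noncomputable def bowenEntMeasδ [MeasurableSpace X] (T : X → X) (μ : Measure X)
    (ε δ : ℝ) : ℝ≥0∞ :=
  sInf {a : ℝ≥0∞ | ∃ s : ℝ, 0 ≤ s ∧ a = ENNReal.ofReal s ∧
    (⨆ N, bowenPreMeas T μ s N ε δ) = 0}

/-- `M_μ(T,d,ε) = lim_{δ → 0} M^δ(T,d,μ,ε)`. -/
noncomputable def bowenEntMeas [MeasurableSpace X] (T : X → X) (μ : Measure X) (ε : ℝ) : ℝ≥0∞ :=
  ⨆ δ ∈ Set.Ioo (0 : ℝ) 1, bowenEntMeasδ T μ ε δ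

/-- `𝒫^δ(T,d,μ,s,ε) = inf {∑_i P(T,d,Z_i,s,ε) : μ(⋃ Z_i) > 1 - δ}`. -/
noncomputable def packOuterMeas [MeasurableSpace X] (T : X → X) (μ : Measure X) (s : ℝ)
    (ε δ : ℝ) : ℝ≥0∞ :=
  ⨅ (Zs : ℕ → Set X) (_ : 1 - ENNReal.ofReal δ < μ (⋃ i, Zs i)), ∑' i, packCP T (Zs i) s ε

/-- The critical value `𝒫^δ(T,d,μ,ε)`. -/
noncomputable def packEntMeasδ [MeasurableSpace X] (T : X → X) (μ : Measure X)
    (ε δ : ℝ) : ℝ≥0∞ :=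
  sInf {a : ℝ≥0∞ | ∃ s : ℝ, 0 ≤ s ∧ a = ENNReal.ofReal s ∧ packOuterMeas T μ s ε δ = 0}

/-- `𝒫_μ(T,d,ε) = lim_{δ → 0} 𝒫^δ(T,d,μ,ε)`. -/
noncomputable def packEntMeas [MeasurableSpace X] (T : X → X) (μ : Measure X) (ε : ℝ) : ℝ≥0∞ :=
  ⨆ δ ∈ Set.Ioo (0 : ℝ) 1, packEntMeasδ T μ ε δ

/-- The `n`-th empirical measure `(1/n) ∑_{j=0}^{n-1} δ_{T^j x}`. -/
noncomputable def empMeas [MeasurableSpace X] (T : X → X) (x : X) (n : ℕ) : Measure X :=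
  (n : ℝ≥0∞)⁻¹ • ∑ j ∈ Finset.range n, Measure.dirac (T^[j] x)

set_option linter.unusedSectionVars false in
lemma empMeas_finite [MeasurableSpace X] (T : X → X) (x : X) (n : ℕ) :
    IsFiniteMeasure (empMeas T x n) := by
  refine ⟨?_⟩
  have h : (∑ j ∈ Finset.range n, Measure.dirac (T^[j] x)) Set.univ = n := by
    rw [Measure.finset_sum_apply]
    simp
  rw [empMeas, Measure.smul_apply, smul_eq_mul, h]
  rcases eq_or_ne (n : ℝ≥0∞) 0 with h0 | h0
  · simp [h0]
  · rw [ENNReal.inv_mul_cancel h0 (by simp)]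
    exact ENNReal.one_lt_top

/-- The `n`-th empirical measure as a finite measure. -/
noncomputable def empFM [MeasurableSpace X] (T : X → X) (x : X) (n : ℕ) : FiniteMeasure X :=
  ⟨empMeas T x n, empMeas_finite T x n⟩

/-- The set of generic points of `μ`: points whose empirical measures converge weakly to `μ`. -/
def genPts [MeasurableSpace X] [OpensMeasurableSpace X] (T : X → X) (μ : Measure X) [IsFiniteMeasure μ] : Set X :=
  {x | Tendsto (fun n => empFM T x n) atTop (𝓝 (⟨μ, ‹_›⟩ : FiniteMeasure X))}

/-- `X_{n,F}`: points whose `n`-th empirical measure lies in `F`. -/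
def XnF [MeasurableSpace X] [OpensMeasurableSpace X] (T : X → X) (F : Set (FiniteMeasure X)) (n : ℕ) : Set X :=
  {x | empFM T x n ∈ F}

/-- Pfister–Sullivan `ε`-entropy of `μ`. -/
noncomputable def psEnt [MeasurableSpace X] [OpensMeasurableSpace X] (T : X → X) (μ : Measure X) [IsFiniteMeasure μ]
    (ε : ℝ) : ℝ≥0∞ :=
  ⨅ (F : Set (FiniteMeasure X)) (_ : F ∈ @nhds (FiniteMeasure X) _ (⟨μ, ‹_›⟩ : FiniteMeasure X)),
    limsup (fun n => ENNReal.ofReal (Real.log (sepNum T n ε (XnF T F n)) / n)) atTop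

/-- `limsup_{ε → 0⁺} f(ε)/log(1/ε)`. -/
noncomputable def mmUpper (f : ℝ → ℝ≥0∞) : ℝ≥0∞ :=
  limsup (fun ε : ℝ => f ε / ENNReal.ofReal (Real.log (1 / ε))) (𝓝[>] (0 : ℝ))

/-- `liminf_{ε → 0⁺} f(ε)/log(1/ε)`. -/
noncomputable def mmLower (f : ℝ → ℝ≥0∞) : ℝ≥0∞ :=
  liminf (fun ε : ℝ => f ε / ENNReal.ofReal (Real.log (1 / ε))) (𝓝[>] (0 : ℝ))

/-- Bowen upper metric mean dimension of a subset. -/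
noncomputable def mdimBUpper (T : X → X) (Z : Set X) : ℝ≥0∞ :=
  mmUpper (fun ε => bowenEnt T Z ε)

/-- Packing upper metric mean dimension of a subset. -/
noncomputable def mdimPUpper (T : X → X) (Z : Set X) : ℝ≥0∞ :=
  mmUpper (fun ε => packEnt T Z ε)

/-- Packing lower metric mean dimension of a subset. -/
noncomputable def mdimPLower (T : X → X) (Z : Set X) : ℝ≥0∞ :=
  mmLower (fun ε => packEnt T Z ε)

/-- nnreal Finset.sup version -/
noncomputable def bkSup (T : X → X) (n : ℕ) (x y : X) : NNReal :=
  (Finset.range n).sup fun j => nndist (T^[j] x) (T^[j] y)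

lemma bowenDist_eq (T : X → X) (n : ℕ) (x y : X) :
    bowenDist T n x y = (bkSup T n x y : ℝ) := by
  refine le_antisymm ?_ ?_
  · refine Real.iSup_le (fun j => Real.iSup_le (fun hj => ?_) (bkSup T n x y).coe_nonneg)
      (bkSup T n x y).coe_nonneg
    rw [dist_nndist]
    exact_mod_cast Finset.le_sup (f := fun j => nndist (T^[j] x) (T^[j] y)) hj
  · rcases eq_or_ne n 0 with rfl | hn
    · simp only [bkSup, Finset.range_zero, Finset.sup_empty]
      exact Real.iSup_nonneg fun j => Real.iSup_nonneg fun hj => dist_nonneg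
    · obtain ⟨j₀, hj₀, hsup⟩ := Finset.exists_mem_eq_sup (Finset.range n)
        ⟨0, Finset.mem_range.2 (Nat.pos_of_ne_zero hn)⟩
        (fun j => nndist (T^[j] x) (T^[j] y))
      have hbdd : BddAbove (Set.range fun j => ⨆ (_ : j ∈ Finset.range n),
          dist (T^[j] x) (T^[j] y)) := by
        refine ⟨(bkSup T n x y : ℝ), ?_⟩
        rintro _ ⟨j, rfl⟩
        refine Real.iSup_le (fun hj => ?_) (bkSup T n x y).coe_nonneg
        rw [dist_nndist]
        exact_mod_cast Finset.le_sup (f := fun j => nndist (T^[j] x) (T^[j] y)) hj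
      calc (bkSup T n x y : ℝ) = dist (T^[j₀] x) (T^[j₀] y) := by
            rw [bkSup, hsup, ← dist_nndist]
        _ = ⨆ (_ : j₀ ∈ Finset.range n), dist (T^[j₀] x) (T^[j₀] y) := (ciSup_pos (f := fun _ => dist (T^[j₀] x) (T^[j₀] y)) hj₀).symm
        _ ≤ bowenDist T n x y := le_ciSup hbdd j₀

lemma mem_bowenBall {T : X → X} {n : ℕ} {x y : X} {r : ℝ} :
    y ∈ bowenBall T n x r ↔ (bkSup T n x y : ℝ) < r := by
  rw [bowenBall, mem_setOf_eq, bowenDist_eq]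

lemma mem_bowenClosedBall {T : X → X} {n : ℕ} {x y : X} {r : ℝ} :
    y ∈ bowenClosedBall T n x r ↔ (bkSup T n x y : ℝ) ≤ r := by
  rw [bowenClosedBall, mem_setOf_eq, bowenDist_eq]

lemma bkSup_self (T : X → X) (n : ℕ) (x : X) : bkSup T n x x = 0 := by
  simp [bkSup]

lemma bkSup_comm (T : X → X) (n : ℕ) (x y : X) : bkSup T n x y = bkSup T n y x := by
  simp [bkSup, nndist_comm]

lemma bkSup_triangle (T : X → X) (n : ℕ) (x y z : X) :
    bkSup T n x z ≤ bkSup T n x y + bkSup T n y z := by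
  refine Finset.sup_le fun j hj => (nndist_triangle (T^[j] x) (T^[j] y) (T^[j] z)).trans ?_
  exact add_le_add (Finset.le_sup (f := fun j => nndist (T^[j] x) (T^[j] y)) hj)
    (Finset.le_sup (f := fun j => nndist (T^[j] y) (T^[j] z)) hj)

lemma bkSup_mono_n (T : X → X) {m n : ℕ} (h : m ≤ n) (x y : X) :
    bkSup T m x y ≤ bkSup T n x y :=
  Finset.sup_mono (Finset.range_subset_range.2 h)

lemma self_mem_bowenBall {T : X → X} {n : ℕ} {x : X} {r : ℝ} (hr : 0 < r) :
    x ∈ bowenBall T n x r := by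
  rw [mem_bowenBall, bkSup_self]; exact_mod_cast hr

lemma self_mem_bowenClosedBall {T : X → X} {n : ℕ} {x : X} {r : ℝ} (hr : 0 ≤ r) :
    x ∈ bowenClosedBall T n x r := by
  rw [mem_bowenClosedBall, bkSup_self]; exact_mod_cast hr

lemma bowenBall_subset_closed {T : X → X} {n : ℕ} {x : X} {r : ℝ} :
    bowenBall T n x r ⊆ bowenClosedBall T n x r := fun y hy =>
  mem_bowenClosedBall.2 (mem_bowenBall.1 hy).le

lemma isOpen_bowenBall {T : X → X} (hT : Continuous T) {n : ℕ} {x : X} {r : ℝ} :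
    IsOpen (bowenBall T n x r) := by
  rcases le_or_gt r 0 with hr | hr
  · convert isOpen_empty
    ext y
    simp only [mem_bowenBall, mem_empty_iff_false, iff_false, not_lt]
    exact hr.trans (bkSup T n x y).coe_nonneg
  · have hset : bowenBall T n x r =
        ⋂ j ∈ Finset.range n, (T^[j]) ⁻¹' Metric.ball (T^[j] x) r := by
      ext y
      simp only [mem_iInter, mem_preimage, Metric.mem_ball, mem_bowenBall]
      constructor
      · intro h j hj
        rw [dist_comm, dist_nndist]
        calc (nndist (T^[j] x) (T^[j] y) : ℝ) ≤ (bkSup T n x y : ℝ) := by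
              exact_mod_cast Finset.le_sup (f := fun j => nndist (T^[j] x) (T^[j] y)) hj
          _ < r := h
      · intro h
        rcases eq_or_ne n 0 with rfl | hn
        · simpa [bkSup] using hr
        · obtain ⟨j₀, hj₀, hsup⟩ := Finset.exists_mem_eq_sup (Finset.range n)
            ⟨0, Finset.mem_range.2 (Nat.pos_of_ne_zero hn)⟩
            (fun j => nndist (T^[j] x) (T^[j] y))
          rw [bkSup, hsup, ← dist_nndist, dist_comm]
          exact h j₀ hj₀
    rw [hset]
    exact isOpen_biInter_finset fun j _ => (Metric.isOpen_ball).preimage (hT.iterate j)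

lemma lsc_meas_bowenBall [MeasurableSpace X] {T : X → X} (hT : Continuous T)
    (μ : Measure X) {ε : ℝ} (hε : 0 < ε) (n : ℕ) :
    LowerSemicontinuous fun x => μ (bowenBall T n x ε) := by
  intro x c hc
  set Ck : ℕ → Set X := fun k => bowenClosedBall T n x (ε - 1 / (k + 1)) with hCk
  have hmono : Monotone Ck := by
    intro k k' hkk' y hy
    rw [mem_bowenClosedBall] at hy ⊢
    refine hy.trans ?_
    have h1 : (1 : ℝ) / (k' + 1) ≤ 1 / (k + 1) := by
      apply one_div_le_one_div_of_le (by positivity)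
      have : (k : ℝ) ≤ k' := Nat.cast_le.2 hkk'
      linarith
    linarith
  have hUnion : (⋃ k, Ck k) = bowenBall T n x ε := by
    ext y
    simp only [mem_iUnion, hCk, mem_bowenClosedBall, mem_bowenBall]
    constructor
    · rintro ⟨k, hk⟩
      have : (0:ℝ) < 1 / (k + 1) := by positivity
      linarith
    · intro h
      obtain ⟨k, hk⟩ := exists_nat_one_div_lt (sub_pos.2 h)
      exact ⟨k, by push_cast at hk ⊢; linarith⟩
  have h2 : Tendsto (fun k => μ (Ck k)) atTop (𝓝 (μ (bowenBall T n x ε))) := by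
    have := tendsto_measure_iUnion_atTop (μ := μ) hmono
    rw [hUnion] at this
    exact this
  obtain ⟨k, hk⟩ := (h2.eventually (eventually_gt_nhds hc)).exists
  have hopen : IsOpen (bowenBall T n x (1 / (k + 1))) := isOpen_bowenBall hT
  have hxmem : x ∈ bowenBall T n x (1 / (k + 1)) := self_mem_bowenBall (by positivity)
  refine Filter.eventually_of_mem (hopen.mem_nhds hxmem) fun x' hx' => ?_
  refine hk.trans_le (measure_mono ?_)
  intro y hy
  rw [mem_bowenClosedBall] at hy
  rw [mem_bowenBall] at hx' ⊢
  have htri : (bkSup T n x' y : ℝ) ≤ (bkSup T n x' x : ℝ) + (bkSup T n x y : ℝ) := by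
    exact_mod_cast bkSup_triangle T n x' x y
  have hcomm : (bkSup T n x' x : ℝ) = (bkSup T n x x' : ℝ) := by
    rw [bkSup_comm]
  rw [hcomm] at htri
  linarith

lemma measurable_negLogMeas_bowenBall [MeasurableSpace X] [BorelSpace X] {T : X → X}
    (hT : Continuous T) (μ : Measure X) {ε : ℝ} (hε : 0 < ε) (n : ℕ) :
    Measurable fun x => negLogMeas μ (bowenBall T n x ε) := by
  have hφ : Measurable fun t : ℝ≥0∞ =>
      (if t = 0 then (⊤ : ℝ≥0∞) else ENNReal.ofReal (-Real.log t.toReal)) := by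
    refine Measurable.ite ?_ measurable_const ?_
    · exact measurableSet_eq
    · exact ENNReal.measurable_ofReal.comp ((Real.measurable_log.comp ENNReal.measurable_toReal).neg)
  exact hφ.comp (lsc_meas_bowenBall hT μ hε n).measurable

lemma measurable_bk [MeasurableSpace X] [BorelSpace X] {T : X → X}
    (hT : Continuous T) (μ : Measure X) {ε : ℝ} (hε : 0 < ε) :
    Measurable fun x => limsup (fun n => negLogMeas μ (bowenBall T n x ε) / n) atTop := by
  refine Measurable.limsup fun n => ?_
  exact (measurable_negLogMeas_bowenBall hT μ hε n).div measurable_const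

lemma packPre_anti (T : X → X) (Z : Set X) (s : ℝ) (ε : ℝ) {N N' : ℕ} (h : N ≤ N') :
    packPre T Z s N' ε ≤ packPre T Z s N ε := by
  refine iSup₂_le fun I hI => le_iSup₂_of_le I
    ⟨hI.1, fun p hp => ⟨h.trans (hI.2.1 p hp).1, (hI.2.1 p hp).2⟩, hI.2.2⟩ le_rfl

lemma core_cover [CompactSpace X] [MeasurableSpace X] [BorelSpace X]
    (T : X → X) (hT : Continuous T) (μ : Measure X) [IsFiniteMeasure μ]
    {ε s τ : ℝ} (hε : 0 < ε) (hτ : 0 ≤ τ) (N : ℕ) {S Z : Set X} (hSZ : S ⊆ Z)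
    (hS : ∀ x ∈ S, ∃ m, N ≤ m ∧
      μ (bowenBall T m x ε) ≤ ENNReal.ofReal (Real.exp (-(↑m * (s + τ))))) :
    μ S ≤ ENNReal.ofReal (Real.exp (-(↑N * τ))) * packPre T Z s N (ε / 10) := by
  classical
  have hε10 : (0:ℝ) < ε / 10 := by linarith
  -- choose orders
  have h : ∀ x : X, ∃ m, N ≤ m ∧ (x ∈ S →
      μ (bowenBall T m x ε) ≤ ENNReal.ofReal (Real.exp (-(↑m * (s + τ))))) := by
    intro x
    by_cases hx : x ∈ S
    · obtain ⟨m, hm1, hm2⟩ := hS x hx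
      exact ⟨m, hm1, fun _ => hm2⟩
    · exact ⟨N, le_rfl, fun h' => absurd h' hx⟩
  choose ord hordN hordμ using h
  set Ball : X → Set X := fun y => bowenClosedBall T (ord y) y (ε / 10) with hBall
  have hball_self : ∀ y, y ∈ Ball y := fun y => self_mem_bowenClosedBall hε10.le
  -- the family of admissible level-k extensions
  set Fam : Set X → ℕ → Set (Set X) := fun C k =>
    {D | D ⊆ S ∧ (∀ x ∈ D, ord x = k) ∧ D.PairwiseDisjoint Ball ∧
      ∀ y ∈ D, ∀ z ∈ C, z ≠ y → Disjoint (Ball y) (Ball z)} with hFam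
  have exMax : ∀ C k, ∃ D, Maximal (· ∈ Fam C k) D := by
    intro C k
    apply zorn_subset
    intro c hc hchain
    refine ⟨⋃₀ c, ⟨?_, ?_, ?_, ?_⟩, fun t ht => subset_sUnion_of_mem ht⟩
    · exact sUnion_subset fun D hD => (hc hD).1
    · rintro x ⟨D, hD, hx⟩
      exact (hc hD).2.1 x hx
    · rintro a ⟨D₁, hD₁, ha⟩ b ⟨D₂, hD₂, hb⟩ hab
      rcases hchain.total hD₁ hD₂ with hsub | hsub
      · exact (hc hD₂).2.2.1 (hsub ha) hb hab
      · exact (hc hD₁).2.2.1 ha (hsub hb) hab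
    · rintro y ⟨D, hD, hy⟩ z hz hzy
      exact (hc hD).2.2.2 y hy z hz hzy
  set D0 : Set X → ℕ → Set X := fun C k => (exMax C k).choose with hD0def
  have hD0 : ∀ C k, Maximal (· ∈ Fam C k) (D0 C k) := fun C k => (exMax C k).choose_spec
  obtain ⟨C, hC0, hCsucc⟩ : ∃ C : ℕ → Set X, C 0 = ∅ ∧
      ∀ k, C (k + 1) = C k ∪ D0 (C k) k :=
    ⟨fun k => Nat.rec (motive := fun _ => Set X) ∅ (fun k Ck => Ck ∪ D0 Ck k) k, rfl,
      fun k => rfl⟩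
  have hCS : ∀ k, C k ⊆ S ∧ (∀ x ∈ C k, ord x < k) ∧ (C k).PairwiseDisjoint Ball := by
    intro k
    induction k with
    | zero => simp [hC0]
    | succ k ih =>
      have hD := (hD0 (C k) k).prop
      rw [hCsucc]
      refine ⟨union_subset ih.1 hD.1, ?_, ?_⟩
      · rintro x (hx | hx)
        · exact (ih.2.1 x hx).trans (Nat.lt_succ_self k)
        · rw [hD.2.1 x hx]; exact Nat.lt_succ_self k
      · rintro a (haC | haD) b (hbC | hbD) hab
        · exact ih.2.2 haC hbC hab
        · exact (hD.2.2.2 b hbD a haC hab).symm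
        · exact hD.2.2.2 a haD b hbC hab.symm
        · exact hD.2.2.1 haD hbD hab
  have hCmono : Monotone C := monotone_nat_of_le_succ fun k => by
    rw [hCsucc]; exact subset_union_left
  have hmax : ∀ x ∈ S, ∃ y ∈ C (ord x + 1), ¬ Disjoint (Ball x) (Ball y) := by
    intro x hx
    by_contra hcon
    push_neg at hcon
    set k := ord x with hk
    have hD := (hD0 (C k) k).prop
    have hmem : (D0 (C k) k) ∪ {x} ∈ Fam (C k) k := by
      refine ⟨union_subset hD.1 (by simpa using hx), ?_, ?_, ?_⟩
      · rintro z (hz | hz)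
        · exact hD.2.1 z hz
        · rw [mem_singleton_iff] at hz; rw [hz]
      · rintro a (haD | haX) b (hbD | hbX) hab
        · exact hD.2.2.1 haD hbD hab
        · rw [mem_singleton_iff] at hbX; subst hbX
          exact (hcon a (by rw [hCsucc]; exact Or.inr haD)).symm
        · rw [mem_singleton_iff] at haX; subst haX
          exact hcon b (by rw [hCsucc]; exact Or.inr hbD)
        · rw [mem_singleton_iff] at haX hbX; exact absurd (haX.trans hbX.symm) hab
      · rintro y (hyD | hyX) z hz hzy
        · exact hD.2.2.2 y hyD z hz hzy
        · rw [mem_singleton_iff] at hyX; subst hyX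
          exact hcon z (by rw [hCsucc]; exact Or.inl hz)
    have hsub := (hD0 (C k) k).2 hmem subset_union_left
    have hxD : x ∈ D0 (C k) k := hsub (Or.inr rfl)
    have := hcon x (by rw [hCsucc]; exact Or.inr hxD)
    exact (Set.not_disjoint_iff.mpr ⟨x, hball_self x, hball_self x⟩) this
  set J : Set X := ⋃ k, C k with hJ
  have hJS : J ⊆ S := iUnion_subset fun k => (hCS k).1
  have hJpd : J.PairwiseDisjoint Ball := by
    rintro a ha b hb hab
    obtain ⟨ka, hka⟩ := mem_iUnion.1 ha
    obtain ⟨kb, hkb⟩ := mem_iUnion.1 hb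
    exact (hCS (max ka kb)).2.2 (hCmono (le_max_left _ _) hka)
      (hCmono (le_max_right _ _) hkb) hab
  have hJcov : S ⊆ ⋃ y ∈ J, bowenBall T (ord y) y ε := by
    intro x hx
    obtain ⟨y, hyC, hnd⟩ := hmax x hx
    have hyJ : y ∈ J := mem_iUnion.2 ⟨_, hyC⟩
    have hfy : ord y ≤ ord x := Nat.lt_succ_iff.mp ((hCS (ord x + 1)).2.1 y hyC)
    obtain ⟨z, hz1, hz2⟩ := Set.not_disjoint_iff.mp hnd
    rw [hBall, mem_bowenClosedBall] at hz1 hz2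
    refine mem_biUnion hyJ ?_
    rw [mem_bowenBall]
    have htri : (bkSup T (ord y) y x : ℝ) ≤
        (bkSup T (ord y) y z : ℝ) + (bkSup T (ord y) z x : ℝ) := by
      exact_mod_cast bkSup_triangle T (ord y) y z x
    have h1 : (bkSup T (ord y) z x : ℝ) ≤ (bkSup T (ord x) x z : ℝ) := by
      rw [bkSup_comm]
      exact_mod_cast bkSup_mono_n T hfy x z
    linarith
  have hJc : J.Countable := by
    refine hJpd.countable_of_nonempty_interior fun y _ => ⟨y, ?_⟩
    have hsub : bowenBall T (ord y) y (ε / 10) ⊆ interior (Ball y) :=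
      interior_maximal bowenBall_subset_closed (isOpen_bowenBall hT)
    exact hsub (self_mem_bowenBall hε10)
  calc μ S ≤ μ (⋃ y ∈ J, bowenBall T (ord y) y ε) := measure_mono hJcov
    _ ≤ ∑' y : J, μ (bowenBall T (ord (y : X)) (y : X) ε) := measure_biUnion_le μ hJc _
    _ ≤ ∑' y : J, ENNReal.ofReal (Real.exp (-(↑N * τ))) *
        ENNReal.ofReal (Real.exp (-(s * (ord (y : X) : ℝ)))) := by
      refine ENNReal.tsum_le_tsum fun y => (hordμ (y : X) (hJS y.2)).trans ?_
      rw [← ENNReal.ofReal_mul (Real.exp_nonneg _), ← Real.exp_add]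
      apply ENNReal.ofReal_le_ofReal
      apply Real.exp_le_exp.mpr
      have hNm : (N : ℝ) ≤ (ord (y : X) : ℝ) := Nat.cast_le.2 (hordN (y : X))
      nlinarith [mul_le_mul_of_nonneg_right hNm hτ]
    _ = ENNReal.ofReal (Real.exp (-(↑N * τ))) *
        ∑' y : J, ENNReal.ofReal (Real.exp (-(s * (ord (y : X) : ℝ)))) :=
      ENNReal.tsum_mul_left
    _ ≤ ENNReal.ofReal (Real.exp (-(↑N * τ))) * packPre T Z s N (ε / 10) := by
      refine mul_le_mul_right ?_ _
      set I : Set (X × ℕ) := (fun y => (y, ord y)) '' J with hI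
      have hinj : InjOn (fun y => (y, ord y)) J := fun a _ b _ hab =>
        congrArg Prod.fst hab
      have heq : weightSum s I =
          ∑' y : J, ENNReal.ofReal (Real.exp (-(s * (ord (y : X) : ℝ)))) := by
        rw [weightSum, hI]
        exact tsum_image (fun p : X × ℕ => ENNReal.ofReal (Real.exp (-(s * (p.2 : ℝ))))) hinj
      rw [← heq]
      refine le_iSup₂_of_le I ⟨hJc.image _, ?_, ?_⟩ le_rfl
      · rintro p ⟨y, hy, rfl⟩
        exact ⟨hordN y, hSZ (hJS hy)⟩
      · rintro p ⟨y, hy, rfl⟩ q ⟨z, hz, rfl⟩ hpq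
        have hyz : y ≠ z := fun hh => hpq (by rw [hh])
        exact hJpd hy hz hyz

lemma null_inter [CompactSpace X] [MeasurableSpace X] [BorelSpace X]
    (T : X → X) (hT : Continuous T) (μ : Measure X) [IsProbabilityMeasure μ]
    {ε s τ : ℝ} (hε : 0 < ε) (hs : 0 ≤ s) (hτ : 0 < τ) {Z : Set X}
    (hfin : packCP T Z s (ε / 10) ≠ ⊤) :
    μ ({x | ENNReal.ofReal (s + τ) <
        limsup (fun n => negLogMeas μ (bowenBall T n x ε) / n) atTop} ∩ Z) = 0 := by
  set A := {x | ENNReal.ofReal (s + τ) <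
      limsup (fun n => negLogMeas μ (bowenBall T n x ε) / n) atTop} with hA
  have key : ∀ N : ℕ, μ (A ∩ Z) ≤
      ENNReal.ofReal (Real.exp (-(↑N * τ))) * packPre T Z s N (ε / 10) := by
    intro N
    refine core_cover T hT μ hε hτ.le N inter_subset_right ?_
    intro x hx
    have hfreq : ∃ᶠ n in atTop, ENNReal.ofReal (s + τ) <
        negLogMeas μ (bowenBall T n x ε) / n := frequently_lt_of_lt_limsup (by isBoundedDefault) hx.1
    obtain ⟨m, hmN, hm⟩ := frequently_atTop.mp hfreq (max N 1)
    refine ⟨m, (le_max_left _ _).trans hmN, ?_⟩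
    have hm1 : 1 ≤ m := (le_max_right _ _).trans hmN
    by_cases h0 : μ (bowenBall T m x ε) = 0
    · simp [h0]
    have hm' : ENNReal.ofReal (s + τ) * m < negLogMeas μ (bowenBall T m x ε) :=
      (ENNReal.lt_div_iff_mul_lt (Or.inl (Nat.cast_ne_zero.2 (by omega)))
        (Or.inl (ENNReal.natCast_ne_top m))).mp hm
    rw [negLogMeas, if_neg h0] at hm'
    have hst : (0:ℝ) ≤ s + τ := by linarith
    rw [show ((m : ℝ≥0∞)) = ENNReal.ofReal (m : ℝ) from (ENNReal.ofReal_natCast m).symm,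
      ← ENNReal.ofReal_mul hst] at hm'
    have hlt : (s + τ) * m < -Real.log (μ (bowenBall T m x ε)).toReal := by
      by_contra hcon
      push_neg at hcon
      exact absurd hm' (not_lt.mpr (ENNReal.ofReal_le_ofReal hcon))
    have ht0 : 0 < (μ (bowenBall T m x ε)).toReal :=
      ENNReal.toReal_pos h0 (measure_ne_top μ _)
    have hlt2 : (μ (bowenBall T m x ε)).toReal < Real.exp (-(↑m * (s + τ))) := by
      calc (μ (bowenBall T m x ε)).toReal
          = Real.exp (Real.log (μ (bowenBall T m x ε)).toReal) := (Real.exp_log ht0).symm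
        _ < Real.exp (-(↑m * (s + τ))) := Real.exp_lt_exp.mpr (by nlinarith)
    calc μ (bowenBall T m x ε) = ENNReal.ofReal (μ (bowenBall T m x ε)).toReal :=
          (ENNReal.ofReal_toReal (measure_ne_top μ _)).symm
      _ ≤ ENNReal.ofReal (Real.exp (-(↑m * (s + τ)))) := ENNReal.ofReal_le_ofReal hlt2.le
  obtain ⟨N₀, hN₀⟩ : ∃ N₀, packPre T Z s N₀ (ε / 10) < ⊤ := iInf_lt_iff.mp hfin.lt_top
  have h1 : Tendsto (fun N : ℕ => ENNReal.ofReal (Real.exp (-(↑N * τ)))) atTop (𝓝 0) := by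
    rw [← ENNReal.ofReal_zero]
    apply ENNReal.tendsto_ofReal
    apply Real.tendsto_exp_atBot.comp
    apply tendsto_neg_atTop_atBot.comp
    exact (tendsto_natCast_atTop_atTop (R := ℝ)).atTop_mul_const hτ
  have htend : Tendsto (fun N : ℕ => ENNReal.ofReal (Real.exp (-(↑N * τ))) *
      packPre T Z s N₀ (ε / 10)) atTop (𝓝 0) := by
    have := ENNReal.Tendsto.mul_const h1 (Or.inr hN₀.ne)
    simpa using this
  refine le_antisymm (ge_of_tendsto htend ?_) zero_le
  filter_upwards [eventually_ge_atTop N₀] with N hN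
  exact (key N).trans (mul_le_mul_right (packPre_anti T Z s (ε / 10) hN) _)

lemma measA_le [CompactSpace X] [MeasurableSpace X] [BorelSpace X]
    (T : X → X) (hT : Continuous T) (μ : Measure X) [IsProbabilityMeasure μ]
    {ε s τ δ : ℝ} (hε : 0 < ε) (hs : 0 ≤ s) (hτ : 0 < τ)
    (hpack : packOuterMeas T μ s (ε / 10) δ = 0) :
    μ {x | ENNReal.ofReal (s + τ) <
        limsup (fun n => negLogMeas μ (bowenBall T n x ε) / n) atTop} ≤ ENNReal.ofReal δ := by
  set A := {x | ENNReal.ofReal (s + τ) <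
      limsup (fun n => negLogMeas μ (bowenBall T n x ε) / n) atTop} with hAdef
  have hAmeas : MeasurableSet A := measurableSet_lt measurable_const (measurable_bk hT μ hε)
  have h1 : packOuterMeas T μ s (ε / 10) δ < 1 := by rw [hpack]; exact zero_lt_one
  rw [packOuterMeas] at h1
  obtain ⟨Zs, h1⟩ := iInf_lt_iff.mp h1
  obtain ⟨hZs, h1⟩ := iInf_lt_iff.mp h1
  have hnull : ∀ i, μ (A ∩ Zs i) = 0 := fun i =>
    null_inter T hT μ hε hs hτ (((ENNReal.le_tsum i).trans_lt h1).trans_le le_top).ne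
  have hU : μ (A ∩ ⋃ i, Zs i) = 0 := by
    rw [inter_iUnion]
    exact measure_iUnion_null hnull
  have hcompl : 1 - ENNReal.ofReal δ < μ Aᶜ := by
    refine hZs.trans_le ?_
    calc μ (⋃ i, Zs i) ≤ μ ((A ∩ ⋃ i, Zs i) ∪ Aᶜ) := measure_mono (fun x hx => by
          by_cases hxA : x ∈ A
          · exact Or.inl ⟨hxA, hx⟩
          · exact Or.inr hxA)
      _ ≤ μ (A ∩ ⋃ i, Zs i) + μ Aᶜ := measure_union_le _ _
      _ = μ Aᶜ := by rw [hU, zero_add]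
  by_contra hcon
  push_neg at hcon
  have hle : μ Aᶜ ≤ 1 - ENNReal.ofReal δ := by
    rw [measure_compl hAmeas (measure_ne_top μ A), measure_univ]
    exact tsub_le_tsub_left hcon.le 1
  exact absurd hcompl (not_lt.mpr hle)

/-- `h̄_μ^{BK}(T, ε) ≤ 𝒫_μ(T, d, ε/10)` for any Borel probability measure. -/
theorem stmt_10 {X : Type*} [MetricSpace X] [CompactSpace X] [MeasurableSpace X] [BorelSpace X]
    (T : X → X) (hT : Continuous T) (μ : Measure X) [IsProbabilityMeasure μ]
    (ε : ℝ) (hε : 0 < ε) :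
    bkUpper T μ ε ≤ packEntMeas T μ (ε / 10) := by
  set t := packEntMeas T μ (ε / 10) with ht
  rcases eq_top_or_lt_top t with htop | hlt
  · rw [htop]; exact le_top
  by_contra hcon
  push_neg at hcon
  obtain ⟨r, hr0, hr1, hr2⟩ := ENNReal.lt_iff_exists_real_btwn.mp hcon
  refine absurd hr2 (not_lt.mpr ?_)
  have hrpos : 0 < r := by
    by_contra hr
    push_neg at hr
    rw [ENNReal.ofReal_eq_zero.mpr hr] at hr1
    exact absurd hr1 (not_lt.mpr zero_le)
  have hE : ∀ δ ∈ Set.Ioo (0:ℝ) 1, μ {x | ENNReal.ofReal r <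
      limsup (fun n => negLogMeas μ (bowenBall T n x ε) / n) atTop} ≤ ENNReal.ofReal δ := by
    intro δ hδ
    have h1 : packEntMeasδ T μ (ε / 10) δ < ENNReal.ofReal r :=
      lt_of_le_of_lt (le_biSup _ hδ) hr1
    rw [packEntMeasδ] at h1
    obtain ⟨a, ⟨s, hs0, rfl, hps⟩, has⟩ := sInf_lt_iff.mp h1
    have hsr : s < r := (ENNReal.ofReal_lt_ofReal_iff hrpos).mp has
    have hτ : 0 < r - s := sub_pos.2 hsr
    have := measA_le T hT μ hε hs0 hτ hps
    rw [show s + (r - s) = r by ring] at this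
    exact this
  have hnull : μ {x | ENNReal.ofReal r <
      limsup (fun n => negLogMeas μ (bowenBall T n x ε) / n) atTop} = 0 := by
    refine le_antisymm ?_ zero_le
    have htend : Tendsto (fun n : ℕ => ENNReal.ofReal (1 / (n + 2))) atTop (𝓝 0) := by
      rw [← ENNReal.ofReal_zero]
      apply ENNReal.tendsto_ofReal
      simp only [one_div]
      apply Tendsto.inv_tendsto_atTop
      exact tendsto_atTop_add_const_right atTop 2 (tendsto_natCast_atTop_atTop (R := ℝ))
    refine ge_of_tendsto htend ?_
    filter_upwards with n
    refine hE (1 / (n + 2)) ⟨by positivity, ?_⟩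
    rw [div_lt_one (by positivity)]
    have : (0:ℝ) ≤ n := Nat.cast_nonneg n
    linarith
  have hae : ∀ᵐ x ∂μ, limsup (fun n => negLogMeas μ (bowenBall T n x ε) / n) atTop ≤
      ENNReal.ofReal r := by
    rw [ae_iff]
    simpa [not_le] using hnull
  calc bkUpper T μ ε ≤ ∫⁻ _, ENNReal.ofReal r ∂μ := lintegral_mono_ae hae
    _ = ENNReal.ofReal r := by simp
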